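/- arXiv:2402.08385 — 2 statements merged into one kernel-verified Lean document; each statement's English description precedes it below -/
import Mathlib

section
/- For a complex semisimple Lie algebra g of rank n with invariant degrees d_1,...,d_n and a genus g ≥ 2 curve with D the divisor of a holomorphic differential, the total dimension ∑_{j=1}^n dim O(d_j D) equals dim(g)·(g - 1), provided all d_j ≥ 2. -/
open scoped BigOperators

/-- The degree of a divisor (a finitely supported `ℤ`-valued function on the
points of the curve). -/
noncomputable def divDeg {X : Type*} (E : X →₀ ℤ) : ℤ := E.sum fun _ n => n

lemma divDeg_eq_lsum {X : Type*} (E : X →₀ ℤ) :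
    divDeg E = Finsupp.lsum ℤ (fun _ : X => LinearMap.id (R := ℤ) (M := ℤ)) E := rfl

lemma divDeg_smul {X : Type*} (m : ℤ) (E : X →₀ ℤ) : divDeg (m • E) = m * divDeg E := by
  simp [divDeg_eq_lsum, map_smul, smul_eq_mul]

lemma divDeg_sub {X : Type*} (E F : X →₀ ℤ) : divDeg (E - F) = divDeg E - divDeg F := by
  simp [divDeg_eq_lsum, map_sub]

/-- For a complex semisimple Lie algebra `𝔤` of rank `n` with invariant degrees
`d 1, …, d n` (so that Kostant's identity `∑ (2 d j - 1) = dim 𝔤` holds), and a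
genus `g ≥ 2` curve with `K = (ξ)` the divisor of a holomorphic differential
(so `ell (d j • K) = dim O(d j • K)` is governed by Riemann–Roch), the total
dimension `∑ j, dim O(d j • K)` equals `dim 𝔤 · (g - 1)`, provided all `d j ≥ 2`. -/
theorem sum_dim_riemannRoch_eq_dim_lieAlgebra
    (𝔤 : Type*) [LieRing 𝔤] [LieAlgebra ℂ 𝔤] [FiniteDimensional ℂ 𝔤]
    [LieAlgebra.IsSemisimple ℂ 𝔤]
    (n : ℕ) (hn : n = LieAlgebra.rank ℂ 𝔤)
    (d : Fin n → ℕ) (hd : ∀ j, 2 ≤ d j)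
    (hKostant : ∑ j, (2 * d j - 1) = Module.finrank ℂ 𝔤)
    (X : Type*) (g : ℕ) (hg : 2 ≤ g)
    (ell : (X →₀ ℤ) → ℕ) (K : X →₀ ℤ)
    (hdegK : divDeg K = 2 * (g : ℤ) - 2)
    (hRR : ∀ E : X →₀ ℤ, (ell E : ℤ) - (ell (K - E) : ℤ) = divDeg E + 1 - g)
    (hvanish : ∀ E : X →₀ ℤ, divDeg E < 0 → ell E = 0) :
    ∑ j, ell (d j • K) = Module.finrank ℂ 𝔤 * (g - 1) := by
  have key : ∀ j, (ell (d j • K) : ℤ) = (2 * (d j : ℤ) - 1) * ((g : ℤ) - 1) := by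
    intro j
    have hsmul : (d j • K : X →₀ ℤ) = ((d j : ℤ)) • K := by
      simp [natCast_zsmul]
    have hdeg : divDeg (d j • K) = (d j : ℤ) * (2 * (g : ℤ) - 2) := by
      rw [hsmul, divDeg_smul, hdegK]
    have hdj : (2 : ℤ) ≤ (d j : ℤ) := by exact_mod_cast hd j
    have hgz : (2 : ℤ) ≤ (g : ℤ) := by exact_mod_cast hg
    have hz : ell (K - d j • K) = 0 := by
      apply hvanish
      rw [divDeg_sub, hdegK, hdeg]
      nlinarith
    have h1 := hRR (d j • K)
    rw [hz, hdeg] at h1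
    push_cast at h1
    nlinarith [h1]
  have hcast : (∑ j, (ell (d j • K) : ℤ)) = (Module.finrank ℂ 𝔤 : ℤ) * ((g : ℤ) - 1) := by
    calc (∑ j, (ell (d j • K) : ℤ)) = ∑ j, (2 * (d j : ℤ) - 1) * ((g : ℤ) - 1) := by
          exact Finset.sum_congr rfl fun j _ => key j
      _ = (∑ j, (2 * (d j : ℤ) - 1)) * ((g : ℤ) - 1) := by rw [Finset.sum_mul]
      _ = (Module.finrank ℂ 𝔤 : ℤ) * ((g : ℤ) - 1) := by
          congr 1
          have := congrArg (fun m : ℕ => (m : ℤ)) hKostant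
          push_cast [Nat.cast_sum] at this
          rw [← this]
          refine Finset.sum_congr rfl fun j _ => ?_
          have : (1 : ℕ) ≤ 2 * d j := by have := hd j; omega
          push_cast [Nat.cast_sub this]
          ring
  have : ((∑ j, ell (d j • K) : ℕ) : ℤ) = ((Module.finrank ℂ 𝔤 * (g - 1) : ℕ) : ℤ) := by
    push_cast [Nat.cast_sub (by omega : 1 ≤ g)]
    simpa using hcast
  exact_mod_cast this
end

section
/- Let F_1,...,F_h be smooth functions and suppose H_1(λ,x),...,H_h(λ,x) of variables (λ_1,...,λ_h,x_1,...,x_h) are implicitly defined by the separated system F_i(H_1,...,H_h, λ_i, x_i) = 0, i = 1,...,h, with the Jacobian ∂(F_1,...,F_h)/∂(H_1,...,H_h) invertible. Define a Poisson bracket {f,g} = ∑_j p_j(λ_j,x_j)(∂f/∂λ_j · ∂g/∂x_j − ∂g/∂λ_j · ∂f/∂x_j). Then {H_a, H_b} = 0 for all a, b. -/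
open scoped BigOperators

/-- **Involutivity of Hamiltonians defined by separated equations**
(Stäckel-type commutativity).  Let `F 1, …, F h` be `C¹` functions, where
`F i` depends on `(H₁, …, H_h)` and on the single pair `(λ_i, x_i)`, and let
`H = (H 1, …, H h)` be implicitly defined on an open set `U` by the separated
system `F i (H, λ_i, x_i) = 0`, `i = 1, …, h`, the Jacobian `(∂F_i/∂H_a)` being
invertible on `U`.  For any functions `p j (λ_j, x_j)` define the Poisson
bracket `{f, g} = ∑_j p_j (∂f/∂λ_j ∂g/∂x_j − ∂g/∂λ_j ∂f/∂x_j)`.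
Then `{H a, H b} = 0` on `U` for all `a, b`. -/
theorem separated_hamiltonians_commute
    (h : ℕ) (F : Fin h → (Fin h → ℝ) → ℝ → ℝ → ℝ)
    (hF : ∀ i, ContDiff ℝ 1 (fun p : (Fin h → ℝ) × ℝ × ℝ => F i p.1 p.2.1 p.2.2))
    (U : Set ((Fin h → ℝ) × (Fin h → ℝ))) (hU : IsOpen U)
    (H : ((Fin h → ℝ) × (Fin h → ℝ)) → (Fin h → ℝ))
    (hHdiff : ∀ a, DifferentiableOn ℝ (fun q => H q a) U)
    (hsep : ∀ q ∈ U, ∀ i, F i (H q) (q.1 i) (q.2 i) = 0)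
    (hJ : ∀ q ∈ U, IsUnit (Matrix.of fun i a : Fin h =>
      fderiv ℝ (fun v => F i v (q.1 i) (q.2 i)) (H q) (Pi.single a 1)))
    (p : Fin h → ℝ → ℝ → ℝ) :
    ∀ q ∈ U, ∀ a b : Fin h,
      ∑ j, p j (q.1 j) (q.2 j) *
        (fderiv ℝ (fun y => H y a) q ((Pi.single j 1 : Fin h → ℝ), (0 : Fin h → ℝ))
            * fderiv ℝ (fun y => H y b) q ((0 : Fin h → ℝ), (Pi.single j 1 : Fin h → ℝ))
          - fderiv ℝ (fun y => H y b) q ((Pi.single j 1 : Fin h → ℝ), (0 : Fin h → ℝ))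
            * fderiv ℝ (fun y => H y a) q ((0 : Fin h → ℝ), (Pi.single j 1 : Fin h → ℝ)))
        = 0 := by
  classical
  intro q hq a b
  have hqU : U ∈ nhds q := hU.mem_nhds hq
  have hHdiffAt : ∀ c, DifferentiableAt ℝ (fun y => H y c) q := fun c =>
    (hHdiff c).differentiableAt hqU
  have hHAt : DifferentiableAt ℝ H q := differentiableAt_pi.2 hHdiffAt
  -- total derivative of Φ i at the relevant point
  set D : Fin h → ((Fin h → ℝ) × ℝ × ℝ) →L[ℝ] ℝ :=
    fun i => fderiv ℝ (fun p : (Fin h → ℝ) × ℝ × ℝ => F i p.1 p.2.1 p.2.2)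
      (H q, q.1 i, q.2 i) with hD
  have hΦdiff : ∀ i, DifferentiableAt ℝ
      (fun p : (Fin h → ℝ) × ℝ × ℝ => F i p.1 p.2.1 p.2.2) (H q, q.1 i, q.2 i) :=
    fun i => ((hF i).differentiable one_ne_zero).differentiableAt
  -- matrix entries
  have hJentry : ∀ i c : Fin h,
      fderiv ℝ (fun v => F i v (q.1 i) (q.2 i)) (H q) (Pi.single c 1)
        = D i (Pi.single c 1, 0, 0) := by
    intro i c
    have h1 : (fun v : Fin h → ℝ => F i v (q.1 i) (q.2 i))
        = (fun p : (Fin h → ℝ) × ℝ × ℝ => F i p.1 p.2.1 p.2.2)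
          ∘ (fun v : Fin h → ℝ => (v, (q.1 i, q.2 i))) := rfl
    have hfin : DifferentiableAt ℝ
        (fun v : Fin h → ℝ => (v, ((q.1 i : ℝ), (q.2 i : ℝ)))) (H q) :=
      differentiableAt_id.prodMk (differentiableAt_const _)
    rw [h1, fderiv_comp (𝕜 := ℝ) (f := fun v : Fin h → ℝ => (v, ((q.1 i : ℝ), (q.2 i : ℝ))))
      (H q) (hΦdiff i) hfin]
    have h2 : fderiv ℝ (fun v : Fin h → ℝ => (v, ((q.1 i : ℝ), (q.2 i : ℝ)))) (H q)
        = (ContinuousLinearMap.id ℝ (Fin h → ℝ)).prod 0 := by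
      rw [DifferentiableAt.fderiv_prodMk differentiableAt_fun_id (differentiableAt_const _),
        fderiv_id', fderiv_fun_const]
      rfl
    rw [h2]
    rfl
  -- the derivative of H as a vector
  have hHfd : fderiv ℝ H q
      = ContinuousLinearMap.pi fun c => fderiv ℝ (fun y => H y c) q :=
    fderiv_pi hHdiffAt
  -- key vanishing identity
  have hkey : ∀ (i : Fin h) (w : (Fin h → ℝ) × (Fin h → ℝ)),
      D i (fderiv ℝ H q w, w.1 i, w.2 i) = 0 := by
    intro i w
    set ℓ : ((Fin h → ℝ) × (Fin h → ℝ)) →L[ℝ] ℝ × ℝ :=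
      ((ContinuousLinearMap.proj i).comp
        (ContinuousLinearMap.fst ℝ (Fin h → ℝ) (Fin h → ℝ))).prod
      ((ContinuousLinearMap.proj i).comp
        (ContinuousLinearMap.snd ℝ (Fin h → ℝ) (Fin h → ℝ))) with hℓ
    have hℓd : DifferentiableAt ℝ
        (fun y : (Fin h → ℝ) × (Fin h → ℝ) => ((y.1 i : ℝ), (y.2 i : ℝ))) q :=
      ℓ.differentiableAt
    have hψ : DifferentiableAt ℝ
        (fun y : (Fin h → ℝ) × (Fin h → ℝ) => (H y, (y.1 i, y.2 i))) q :=
      hHAt.prodMk hℓd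
    have hψd : fderiv ℝ
        (fun y : (Fin h → ℝ) × (Fin h → ℝ) => (H y, ((y.1 i : ℝ), (y.2 i : ℝ)))) q
        = (fderiv ℝ H q).prod ℓ := by
      rw [DifferentiableAt.fderiv_prodMk hHAt hℓd]
      congr 1
      exact ℓ.fderiv
    have hG0 : fderiv ℝ ((fun p : (Fin h → ℝ) × ℝ × ℝ => F i p.1 p.2.1 p.2.2)
        ∘ (fun y : (Fin h → ℝ) × (Fin h → ℝ) => (H y, (y.1 i, y.2 i)))) q = 0 := by
      have hev : ((fun p : (Fin h → ℝ) × ℝ × ℝ => F i p.1 p.2.1 p.2.2)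
          ∘ (fun y : (Fin h → ℝ) × (Fin h → ℝ) => (H y, (y.1 i, y.2 i))))
          =ᶠ[nhds q] (fun _ => (0 : ℝ)) := by
        filter_upwards [hqU] with y hy
        exact hsep y hy i
      rw [hev.fderiv_eq]
      exact fderiv_const_apply 0
    have hcomp := fderiv_comp q (hΦdiff i) hψ
    have : (0 : ((Fin h → ℝ) × (Fin h → ℝ)) →L[ℝ] ℝ)
        = (D i).comp ((fderiv ℝ H q).prod ℓ) := by
      rw [← hψd, ← hcomp, hG0]
    have h3 := congrArg (fun (T : ((Fin h → ℝ) × (Fin h → ℝ)) →L[ℝ] ℝ) => T w) this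
    simpa [hℓ] using h3.symm
  -- fix j and show the summand vanishes
  apply Finset.sum_eq_zero
  intro j _
  set M : Matrix (Fin h) (Fin h) ℝ := Matrix.of fun i c : Fin h =>
    fderiv ℝ (fun v => F i v (q.1 i) (q.2 i)) (H q) (Pi.single c 1) with hM
  obtain ⟨Mu, hMu⟩ := hJ q hq
  set N : Matrix (Fin h) (Fin h) ℝ := ↑Mu⁻¹ with hN
  have hNM : N * M = 1 := by
    rw [hN, hM, ← hMu]; exact Units.inv_mul Mu
  -- decomposition of D i on a vector
  have hdec : ∀ (i : Fin h) (u : Fin h → ℝ) (s t : ℝ),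
      D i (u, s, t) = (∑ c, u c * D i (Pi.single c 1, 0, 0))
        + s * D i (0, 1, 0) + t * D i (0, 0, 1) := by
    intro i u s t
    have hu : ((u, s, t) : (Fin h → ℝ) × ℝ × ℝ)
        = (∑ c, u c • ((Pi.single c 1 : Fin h → ℝ), (0:ℝ), (0:ℝ)))
          + s • ((0 : Fin h → ℝ), (1:ℝ), (0:ℝ)) + t • ((0 : Fin h → ℝ), (0:ℝ), (1:ℝ)) := by
      have h1 : (∑ c, u c • ((Pi.single c 1 : Fin h → ℝ), (0:ℝ), (0:ℝ)))
          = ((∑ c, u c • (Pi.single c 1 : Fin h → ℝ)), (0:ℝ), (0:ℝ)) := by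
        induction (Finset.univ : Finset (Fin h)) using Finset.induction with
        | empty => simp [Prod.ext_iff]
        | insert hx ih => simp_all [Prod.ext_iff]
      rw [h1]
      have h2 : (∑ c, u c • (Pi.single c 1 : Fin h → ℝ)) = u := by
        ext d
        simp [Pi.single_apply]
      rw [h2]
      simp [Prod.ext_iff]
    rw [hu, map_add, map_add, map_sum]
    simp only [map_smul, smul_eq_mul]
  -- the two partial-derivative vectors of H
  have hvecs : ∀ (e : (Fin h → ℝ) × (Fin h → ℝ)),
      M.mulVec (fun c => fderiv ℝ (fun y => H y c) q e)
        = fun i => -(e.1 i * D i (0, 1, 0) + e.2 i * D i (0, 0, 1)) := by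
    intro e
    funext i
    have hk : D i ((fun c => fderiv ℝ (fun y => H y c) q e), e.1 i, e.2 i) = 0 := by
      have hk0 := hkey i e
      rw [hHfd] at hk0
      exact hk0
    rw [hdec i _ _ _] at hk
    have : M.mulVec (fun c => fderiv ℝ (fun y => H y c) q e) i
        = ∑ c, fderiv ℝ (fun y => H y c) q e * D i (Pi.single c 1, 0, 0) := by
      rw [hM]
      simp only [Matrix.mulVec, dotProduct, Matrix.of_apply, hJentry]
      exact Finset.sum_congr rfl fun c _ => mul_comm _ _
    rw [this]
    linarith [hk]
  -- apply to the two basis directions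
  have hu := hvecs ((Pi.single j 1 : Fin h → ℝ), (0 : Fin h → ℝ))
  have hv := hvecs ((0 : Fin h → ℝ), (Pi.single j 1 : Fin h → ℝ))
  have hu' : M.mulVec (fun c => fderiv ℝ (fun y => H y c) q
        ((Pi.single j 1 : Fin h → ℝ), (0 : Fin h → ℝ)))
      = Pi.single j (-(D j (0, 1, 0))) := by
    rw [hu]; funext i
    by_cases hij : i = j
    · subst hij; simp
    · simp [Pi.single_apply, hij]
  have hv' : M.mulVec (fun c => fderiv ℝ (fun y => H y c) q
        ((0 : Fin h → ℝ), (Pi.single j 1 : Fin h → ℝ)))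
      = Pi.single j (-(D j (0, 0, 1))) := by
    rw [hv]; funext i
    by_cases hij : i = j
    · subst hij; simp
    · simp [Pi.single_apply, hij]
  have hufinal : ∀ c, fderiv ℝ (fun y => H y c) q
      ((Pi.single j 1 : Fin h → ℝ), (0 : Fin h → ℝ)) = N c j * (-(D j (0, 1, 0))) := by
    intro c
    have : N.mulVec (M.mulVec (fun c => fderiv ℝ (fun y => H y c) q
        ((Pi.single j 1 : Fin h → ℝ), (0 : Fin h → ℝ))))
        = N.mulVec (Pi.single j (-(D j (0, 1, 0)))) := by rw [hu']
    rw [Matrix.mulVec_mulVec, hNM, Matrix.one_mulVec, Matrix.mulVec_single] at this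
    exact congrFun this c
  have hvfinal : ∀ c, fderiv ℝ (fun y => H y c) q
      ((0 : Fin h → ℝ), (Pi.single j 1 : Fin h → ℝ)) = N c j * (-(D j (0, 0, 1))) := by
    intro c
    have : N.mulVec (M.mulVec (fun c => fderiv ℝ (fun y => H y c) q
        ((0 : Fin h → ℝ), (Pi.single j 1 : Fin h → ℝ))))
        = N.mulVec (Pi.single j (-(D j (0, 0, 1)))) := by rw [hv']
    rw [Matrix.mulVec_mulVec, hNM, Matrix.one_mulVec, Matrix.mulVec_single] at this
    exact congrFun this c
  rw [hufinal a, hufinal b, hvfinal a, hvfinal b]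
  ring
end
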